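/- Let x : [−δ, δ] → ℝ² be twice continuously differentiable with |x′(t)| = 1 for every t ∈ [−δ, δ], where δ > 0. Then there exist constants C > 0 and ε₁ ∈ (0, δ] such that for every ε ∈ (0, ε₁] and all t, s ∈ [−1, 1] with t ≠ s, the chord |x(εt) − x(εs)| is nonzero and | ln( |x(εt) − x(εs)| / (ε |t − s|) ) | ≤ C ε. Consequently the kernel (1/ε)·ln( |x(εt) − x(εs)| / (ε|t − s|) ) is bounded on [−1,1]² uniformly in ε ∈ (0, ε₁]. -/

import Mathlib

open Real Set

noncomputable section

private lemma neg_log_one_sub_le {u : ℝ} (hu0 : 0 ≤ u) (hu : u ≤ 1/2) :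
    -Real.log (1 - u) ≤ 2 * u := by
  have h1 : (0:ℝ) < 1 - u := by linarith
  have h2 : Real.exp (-(2*u)) ≤ 1 - u := by
    have h3 : 2*u + 1 ≤ Real.exp (2*u) := Real.add_one_le_exp _
    have h4 : Real.exp (2*u) * Real.exp (-(2*u)) = 1 := by
      rw [← Real.exp_add]; simp
    have h5 : 0 < Real.exp (-(2*u)) := Real.exp_pos _
    nlinarith
  have := (Real.le_log_iff_exp_le h1).2 h2
  linarith

/-- uniform `O(ε)` estimate for the rescaled logarithmic chord kernel of an
arc-length parametrized `C²` curve: for `ε ≤ ε₁` and `t ≠ s` in `[−1, 1]`, the chord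
`x(εt) − x(εs)` is nonzero and `| ln( |x(εt) − x(εs)| / (ε|t − s|) ) | ≤ C ε`. -/
theorem stmt7 (δ : ℝ) (hδ : 0 < δ) (x : ℝ → EuclideanSpace ℝ (Fin 2))
    (hx : ContDiffOn ℝ 2 x (Set.Icc (-δ) δ))
    (hunit : ∀ t ∈ Set.Icc (-δ) δ, ‖derivWithin x (Set.Icc (-δ) δ) t‖ = 1) :
    ∃ C > (0:ℝ), ∃ ε₁ ∈ Set.Ioc 0 δ, ∀ ε ∈ Set.Ioc (0:ℝ) ε₁,
      ∀ t ∈ Set.Icc (-1:ℝ) 1, ∀ s ∈ Set.Icc (-1:ℝ) 1, t ≠ s →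
        x (ε * t) ≠ x (ε * s) ∧
        |Real.log (‖x (ε * t) - x (ε * s)‖ / (ε * |t - s|))| ≤ C * ε := by
  set I : Set ℝ := Set.Icc (-δ) δ with hI
  have hIu : UniqueDiffOn ℝ I := uniqueDiffOn_Icc (by linarith)
  have hconv : Convex ℝ I := convex_Icc _ _
  set f : ℝ → EuclideanSpace ℝ (Fin 2) := derivWithin x I with hf
  have hf1 : ContDiffOn ℝ 1 f I := hx.derivWithin hIu (by norm_num)
  have hxd : DifferentiableOn ℝ x I := hx.differentiableOn (by norm_num)
  -- bound on second derivative
  obtain ⟨M, hM⟩ := isCompact_Icc.exists_bound_of_continuousOn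
    (hf1.continuousOn_derivWithin hIu le_rfl)
  set M₀ : ℝ := |M| + 1 with hM₀
  have hM₀pos : 0 < M₀ := by positivity
  -- f is M₀-Lipschitz on I
  have hlip : ∀ a ∈ I, ∀ b ∈ I, ‖f a - f b‖ ≤ M₀ * ‖a - b‖ := by
    intro a ha b hb
    exact hconv.norm_image_sub_le_of_norm_derivWithin_le
      (hf1.differentiableOn one_ne_zero)
      (fun u hu => le_trans (hM u hu) (by simp [hM₀]; exact le_trans (le_abs_self M) (by linarith)))
      hb ha
  -- main pointwise estimates
  have key : ∀ a ∈ I, ∀ b ∈ I,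
      ‖x a - x b‖ ≤ ‖a - b‖ ∧ ‖a - b‖ - M₀ * ‖a - b‖ * ‖a - b‖ ≤ ‖x a - x b‖ := by
    intro a ha b hb
    have hsub : Set.uIcc a b ⊆ I := (hconv.ordConnected).uIcc_subset ha hb
    have hderiv : ∀ u ∈ Set.uIcc a b, HasDerivWithinAt x (f u) (Set.uIcc a b) u :=
      fun u hu => ((hxd u (hsub hu)).hasDerivWithinAt).mono hsub
    constructor
    · have := Convex.norm_image_sub_le_of_norm_hasDerivWithin_le hderiv
        (fun u hu => le_of_eq (hunit u (hsub hu))) (convex_uIcc a b)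
        Set.right_mem_uIcc Set.left_mem_uIcc
      simpa using this
    · set v : EuclideanSpace ℝ (Fin 2) := f b with hv
      have hg : ∀ u ∈ Set.uIcc a b,
          HasDerivWithinAt (fun u => x u - u • v) (f u - v) (Set.uIcc a b) u := by
        intro u hu
        have h2 : HasDerivWithinAt (fun u : ℝ => u • v) ((1:ℝ) • v) (Set.uIcc a b) u :=
          (hasDerivWithinAt_id u _).smul_const v
        have h3 := (hderiv u hu).sub h2; rw [one_smul] at h3; exact h3
      have hbound : ∀ u ∈ Set.uIcc a b, ‖f u - v‖ ≤ M₀ * ‖a - b‖ := by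
        intro u hu
        have h3 : |b - u| ≤ |b - a| := abs_sub_right_of_mem_uIcc hu
        calc ‖f u - v‖ ≤ M₀ * ‖u - b‖ := hlip u (hsub hu) b hb
          _ ≤ M₀ * ‖a - b‖ := by
              simp only [Real.norm_eq_abs]
              rw [abs_sub_comm u b, abs_sub_comm a b]
              nlinarith [abs_nonneg (b - u)]
      have hG := Convex.norm_image_sub_le_of_norm_hasDerivWithin_le hg hbound
        (convex_uIcc a b) Set.right_mem_uIcc Set.left_mem_uIcc
      have hG' : ‖(x a - a • v) - (x b - b • v)‖ ≤ M₀ * ‖a - b‖ * ‖a - b‖ := by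
        simpa [mul_assoc] using hG
      have hvnorm : ‖v‖ = 1 := hunit b hb
      set X : EuclideanSpace ℝ (Fin 2) := (x a - a • v) - (x b - b • v) with hX
      have hiden : x a - x b = X + (a - b) • v := by rw [hX]; module
      have h1 : ‖(a - b) • v‖ = ‖a - b‖ := by
        rw [norm_smul, hvnorm, mul_one]
      have h4 : ‖(a - b) • v‖ ≤ ‖X + (a - b) • v‖ + ‖X‖ := by
        calc ‖(a - b) • v‖ = ‖(X + (a - b) • v) - X‖ := by rw [add_sub_cancel_left]
          _ ≤ ‖X + (a - b) • v‖ + ‖X‖ := norm_sub_le _ _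
      rw [hiden]
      linarith
  -- choose constants
  refine ⟨4 * M₀, by positivity, min δ (1 / (4 * M₀)), ⟨⟨lt_min hδ (by positivity), min_le_left _ _⟩, ?_⟩⟩
  intro ε hε t ht s hs hts
  obtain ⟨hε0, hε1⟩ := hε
  have hεδ : ε ≤ δ := le_trans hε1 (min_le_left _ _)
  have hεM : ε ≤ 1 / (4 * M₀) := le_trans hε1 (min_le_right _ _)
  have ha : ε * t ∈ I := by
    constructor <;> nlinarith [ht.1, ht.2]
  have hb : ε * s ∈ I := by
    constructor <;> nlinarith [hs.1, hs.2]
  obtain ⟨hup, hlo⟩ := key (ε * t) ha (ε * s) hb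
  have hd : ‖(ε * t : ℝ) - ε * s‖ = ε * |t - s| := by
    rw [Real.norm_eq_abs, ← mul_sub, abs_mul, abs_of_pos hε0]
  set d : ℝ := ε * |t - s| with hdd
  have hdpos : 0 < d := by
    apply mul_pos hε0
    exact abs_pos.2 (sub_ne_zero.2 hts)
  rw [hd] at hup hlo
  have hd2 : d ≤ 2 * ε := by
    have hts2 : |t - s| ≤ 2 := abs_le.2 ⟨by linarith [ht.1, hs.2], by linarith [ht.2, hs.1]⟩
    nlinarith
  set u : ℝ := 2 * M₀ * ε with hu
  have hu0 : 0 ≤ u := by positivity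
  have hu2 : u ≤ 1/2 := by
    have h := (le_div_iff₀ (by positivity : (0:ℝ) < 4 * M₀)).1 hεM
    rw [hu]; nlinarith
  have hMd : M₀ * d ≤ u := by rw [hu]; nlinarith
  obtain ⟨N, hN⟩ : ∃ N, ‖x (ε * t) - x (ε * s)‖ = N := ⟨_, rfl⟩
  rw [hN] at hup hlo ⊢
  have hNlo : d * (1 - u) ≤ N := by nlinarith [mul_le_mul_of_nonneg_left hMd hdpos.le]
  have hNpos : 0 < N := lt_of_lt_of_le (mul_pos hdpos (by linarith)) hNlo
  have hne : x (ε * t) ≠ x (ε * s) := by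
    intro h
    rw [h, sub_self, norm_zero] at hN
    rw [← hN] at hNpos
    exact lt_irrefl 0 hNpos
  refine ⟨hne, ?_⟩
  have hr1 : N / d ≤ 1 := by
    rw [div_le_one hdpos]; exact hup
  have hrlo : 1 - u ≤ N / d := by
    rw [le_div_iff₀ hdpos, mul_comm]; exact hNlo
  have hrpos : 0 < N / d := div_pos hNpos hdpos
  have hlog1 : Real.log (N / d) ≤ 0 := Real.log_nonpos hrpos.le hr1
  have hlog2 : Real.log (1 - u) ≤ Real.log (N / d) :=
    Real.log_le_log (by linarith) hrlo
  have hfin : -Real.log (1 - u) ≤ 2 * u := neg_log_one_sub_le hu0 hu2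
  rw [abs_of_nonpos hlog1]
  calc -Real.log (N / d) ≤ -Real.log (1 - u) := by linarith
    _ ≤ 2 * u := hfin
    _ = 4 * M₀ * ε := by rw [hu]; ring
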